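/- For nodes 0 < x_1 < ... < x_{l+1} < 1 with l ≥ n, every minor of the (l+1)×(n+1) Bernstein–Vandermonde matrix A_{i,j} = C(n, j-1) x_i^{j-1} (1-x_i)^{n-j+1} is strictly positive; i.e., A is strictly totally positive. -/

import Mathlib

open Finset

private lemma few_roots : ∀ (k : ℕ) (a : Fin (k+1) → ℝ) (e : Fin (k+1) → ℕ), StrictMono e →
    ∀ (t : Fin (k+1) → ℝ), StrictMono t → (∀ i, 0 < t i) →
    (∀ i, ∑ j, a j * t i ^ (e j) = 0) → ∀ j, a j = 0 := by
  intro k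
  induction k with
  | zero =>
    intro a e _ t _ htpos hroot j
    have h0 := hroot 0
    rw [Fin.sum_univ_one] at h0
    have ha0 : a 0 = 0 :=
      (mul_eq_zero.mp h0).resolve_right (pow_ne_zero _ (ne_of_gt (htpos 0)))
    exact Fin.fin_one_eq_zero j ▸ ha0
  | succ k ih =>
    intro a e he t ht htpos hroot
    set d : Fin (k+2) → ℕ := fun j => e j - e 0 with hd
    have hde : ∀ j, e j = e 0 + d j := fun j =>
      (Nat.add_sub_cancel' (he.monotone (Fin.zero_le j))).symm
    set h : ℝ → ℝ := fun s => ∑ j, a j * s ^ d j with hh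
    have hderiv : ∀ s : ℝ, HasDerivAt h (∑ j, a j * ((d j : ℝ) * s ^ (d j - 1))) s := by
      intro s
      exact HasDerivAt.fun_sum fun j _ => (hasDerivAt_pow (d j) s).const_mul (a j)
    have hroot' : ∀ i, h (t i) = 0 := by
      intro i
      have h1 := hroot i
      have h2 : ∑ j, a j * t i ^ e j = t i ^ e 0 * h (t i) := by
        rw [hh, Finset.mul_sum]
        refine Finset.sum_congr rfl fun j _ => ?_
        rw [hde j, pow_add]; ring
      rw [h2] at h1
      exact (mul_eq_zero.mp h1).resolve_left (pow_ne_zero _ (ne_of_gt (htpos i)))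
    have rolle : ∀ i : Fin (k+1), ∃ c ∈ Set.Ioo (t i.castSucc) (t i.succ),
        (∑ j, a j * ((d j : ℝ) * c ^ (d j - 1))) = 0 := by
      intro i
      exact exists_hasDerivAt_eq_zero (ht (Fin.castSucc_lt_succ (i := i)))
        (fun s _ => (hderiv s).continuousAt.continuousWithinAt)
        (by rw [hroot', hroot'])
        (fun s _ => hderiv s)
    choose c hc hc0 using rolle
    have hcmono : StrictMono c := by
      intro i j hij
      calc c i < t i.succ := (hc i).2
        _ ≤ t j.castSucc := ht.monotone (by
            rw [Fin.le_def, Fin.val_succ, Fin.coe_castSucc]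
            exact Fin.lt_iff_val_lt_val.mp hij)
        _ < c j := (hc j).1
    have hcpos : ∀ i, 0 < c i := fun i => lt_trans (htpos _) (hc i).1
    have hemono : StrictMono (fun j : Fin (k+1) => d j.succ - 1) := by
      intro j j' hjj'
      have h1 := he (show j.succ < j'.succ from Fin.succ_lt_succ_iff.mpr hjj')
      have h2 := he (show (0 : Fin (k+2)) < j.succ from Fin.succ_pos j)
      simp only [hd]
      omega
    have hroots2 : ∀ i, ∑ j : Fin (k+1),
        (a j.succ * (d j.succ : ℝ)) * c i ^ (d j.succ - 1) = 0 := by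
      intro i
      have h1 := hc0 i
      rw [Fin.sum_univ_succ] at h1
      have hd0 : d 0 = 0 := by simp [hd]
      rw [hd0] at h1
      simp only [Nat.cast_zero, zero_mul, mul_zero, zero_add] at h1
      rw [← h1]
      exact Finset.sum_congr rfl fun j _ => by ring
    have key := ih (fun j => a j.succ * (d j.succ : ℝ)) (fun j => d j.succ - 1)
      hemono c hcmono hcpos hroots2
    have hsucc : ∀ j : Fin (k+1), a j.succ = 0 := by
      intro j
      have hdj : (0 : ℕ) < d j.succ := by
        have := he (show (0 : Fin (k+2)) < j.succ from Fin.succ_pos j)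
        simp only [hd]; omega
      have := key j
      rcases mul_eq_zero.mp this with h | h
      · exact h
      · exact absurd h (Nat.cast_ne_zero.mpr hdj.ne')
    have ha0 : a 0 = 0 := by
      have h1 := hroot 0
      rw [Fin.sum_univ_succ] at h1
      simp only [hsucc, zero_mul, Finset.sum_const_zero, add_zero] at h1
      exact (mul_eq_zero.mp h1).resolve_right (pow_ne_zero _ (ne_of_gt (htpos 0)))
    intro j
    rcases Fin.eq_zero_or_eq_succ j with rfl | ⟨j', rfl⟩
    · exact ha0
    · exact hsucc j'

private lemma genVandermonde_pos : ∀ (k : ℕ) (t : Fin k → ℝ) (e : Fin k → ℕ),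
    StrictMono t → (∀ i, 0 < t i) → StrictMono e →
    0 < (Matrix.of fun i j => t i ^ e j).det := by
  intro k
  induction k with
  | zero => intro t e _ _ _; simp [Matrix.det_fin_zero]
  | succ k ih =>
    intro t e ht htpos he
    set a : Fin (k+1) → ℝ := fun j =>
      (-1 : ℝ) ^ (k + (j:ℕ)) * (Matrix.of fun (i : Fin k) (j' : Fin k) =>
        t i.castSucc ^ e (j.succAbove j')).det with ha
    set F : ℝ → ℝ := fun s => ∑ j, a j * s ^ e j with hFdef
    have hFdet : ∀ s, (Matrix.of fun i j => (Function.update t (Fin.last k) s) i ^ e j).det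
        = F s := by
      intro s
      rw [Matrix.det_succ_row _ (Fin.last k)]
      refine Finset.sum_congr rfl fun j _ => ?_
      have hsub : ((Matrix.of fun i j => (Function.update t (Fin.last k) s) i ^ e j).submatrix
          (Fin.last k).succAbove j.succAbove)
          = (Matrix.of fun (i : Fin k) (j' : Fin k) => t i.castSucc ^ e (j.succAbove j')) := by
        ext i j'
        simp only [Matrix.submatrix_apply, Matrix.of_apply, Fin.succAbove_last]
        rw [Function.update_of_ne (Fin.castSucc_lt_last i).ne]
      rw [hsub]
      simp only [Matrix.of_apply, Function.update_self, Fin.val_last, ha]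
      ring
    have hdet_eq : (Matrix.of fun i j => t i ^ e j).det = F (t (Fin.last k)) := by
      rw [← hFdet, Function.update_eq_self]
    have halast : 0 < a (Fin.last k) := by
      have hsub : (Matrix.of fun (i : Fin k) (j' : Fin k) =>
          t i.castSucc ^ e ((Fin.last k).succAbove j'))
          = (Matrix.of fun (i : Fin k) (j' : Fin k) =>
            (fun i => t i.castSucc) i ^ (fun j' => e j'.castSucc) j') := by
        ext i j'
        simp [Fin.succAbove_last]
      have hpos := ih (fun i => t i.castSucc) (fun j' => e j'.castSucc)
        (fun i j hij => ht (Fin.castSucc_lt_castSucc_iff.mpr hij))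
        (fun i => htpos _)
        (fun i j hij => he (Fin.castSucc_lt_castSucc_iff.mpr hij))
      rw [ha]
      simp only [Fin.val_last]
      rw [hsub]
      have hev : Even (k + k) := ⟨k, rfl⟩
      rw [hev.neg_one_pow, one_mul]
      exact hpos
    have hFroots : ∀ i : Fin k, F (t i.castSucc) = 0 := by
      intro i
      rw [← hFdet]
      refine Matrix.det_zero_of_row_eq (Fin.castSucc_lt_last i).ne ?_
      funext j
      simp only [Matrix.of_apply, Function.update_self]
      rw [Function.update_of_ne (Fin.castSucc_lt_last i).ne]
    have hcont : Continuous F := by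
      apply continuous_finset_sum
      intro j _
      exact continuous_const.mul (continuous_pow (e j))
    -- main claim: 0 < F (t (Fin.last k))
    rw [hdet_eq]
    by_contra hneg
    push_neg at hneg
    -- find S with F S > 0
    rcases Nat.eq_zero_or_pos k with rfl | hk
    · -- 1x1 case: F s = a 0 * s ^ e 0 with a 0 = 1
      have : a (Fin.last 0) = 1 := by
        rw [ha]; simp [Matrix.det_fin_zero]
      have hF1 : F (t (Fin.last 0)) = t (Fin.last 0) ^ e (Fin.last 0) := by
        simp only [hFdef]
        rw [Fin.sum_univ_one]
        have h0 : (0 : Fin 1) = Fin.last 0 := rfl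
        rw [h0, this, one_mul]
      rw [hF1] at hneg
      exact absurd hneg (not_le.mpr (pow_pos (htpos _) _))
    · set E := e (Fin.last k) with hE
      have hE1 : 1 ≤ E := by
        have h1 := he (show (0 : Fin (k+1)) < Fin.last k by
          rw [Fin.lt_def]; simpa using hk)
        omega
      set B : ℝ := ∑ j : Fin k, |a j.castSucc| with hB
      have hBnn : 0 ≤ B := Finset.sum_nonneg fun j _ => abs_nonneg _
      set S : ℝ := max (t (Fin.last k) + 1) (max 1 ((B + 1) / a (Fin.last k))) with hS
      have hS1 : (1:ℝ) ≤ S := le_trans (le_max_left _ _) (le_max_right _ _)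
      have hSpos : (0:ℝ) < S := lt_of_lt_of_le one_pos hS1
      have hSt : t (Fin.last k) < S :=
        lt_of_lt_of_le (lt_add_one _) (le_max_left _ _)
      have hSB : B < a (Fin.last k) * S := by
        have h1 : (B + 1) / a (Fin.last k) ≤ S :=
          le_trans (le_max_right _ _) (le_max_right _ _)
        rw [div_le_iff₀ halast] at h1
        nlinarith
      have hFS : 0 < F S := by
        have hsplit : F S = (∑ j : Fin k, a j.castSucc * S ^ e j.castSucc)
            + a (Fin.last k) * S ^ E := by
          simp only [hFdef]
          rw [Fin.sum_univ_castSucc]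
        have hbound : ∀ j : Fin k, -(|a j.castSucc| * S ^ (E - 1))
            ≤ a j.castSucc * S ^ e j.castSucc := by
          intro j
          have h1 : e j.castSucc ≤ E - 1 :=
            Nat.le_sub_one_of_lt (he (Fin.castSucc_lt_last j))
          have h2 : S ^ e j.castSucc ≤ S ^ (E - 1) := pow_le_pow_right₀ hS1 h1
          have h3 : 0 < S ^ e j.castSucc := pow_pos hSpos _
          have h4 : -(|a j.castSucc|) ≤ a j.castSucc := neg_abs_le _
          nlinarith [abs_nonneg (a j.castSucc)]
        have hsum : -(B * S ^ (E - 1)) ≤ ∑ j : Fin k, a j.castSucc * S ^ e j.castSucc := by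
          rw [hB, Finset.sum_mul, ← Finset.sum_neg_distrib]
          exact Finset.sum_le_sum fun j _ => hbound j
        have hpow : S ^ E = S ^ (E - 1) * S := by
          rw [← pow_succ, Nat.sub_add_cancel hE1]
        have hp1 : 0 < S ^ (E - 1) := pow_pos hSpos _
        rw [hsplit]
        nlinarith
      -- IVT gives a root c ≥ t last
      have hIcc : (0:ℝ) ∈ Set.Icc (F (t (Fin.last k))) (F S) := ⟨hneg, le_of_lt hFS⟩
      have := intermediate_value_Icc (le_of_lt hSt) hcont.continuousOn hIcc
      obtain ⟨cc, hccmem, hcc0⟩ := this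
      set t' : Fin (k+1) → ℝ := Function.update t (Fin.last k) cc with ht'def
      have ht' : StrictMono t' := by
        intro i j hij
        rcases eq_or_ne j (Fin.last k) with rfl | hj
        · rw [ht'def, Function.update_of_ne (ne_of_lt hij), Function.update_self]
          exact lt_of_lt_of_le (ht hij) hccmem.1
        · have hi : i ≠ Fin.last k := by
            intro h; subst h
            exact absurd (lt_of_lt_of_le hij (Fin.le_last j)) (lt_irrefl _)
          rw [ht'def, Function.update_of_ne hi, Function.update_of_ne hj]
          exact ht hij
      have ht'pos : ∀ i, 0 < t' i := by
        intro i
        rcases eq_or_ne i (Fin.last k) with rfl | hi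
        · rw [ht'def, Function.update_self]
          exact lt_of_lt_of_le (htpos _) hccmem.1
        · rw [ht'def, Function.update_of_ne hi]; exact htpos i
      have hroots : ∀ i, ∑ j, a j * t' i ^ e j = 0 := by
        intro i
        rcases eq_or_ne i (Fin.last k) with rfl | hi
        · rw [ht'def, Function.update_self]; exact hcc0
        · rw [ht'def, Function.update_of_ne hi]
          obtain ⟨i', rfl⟩ := Fin.exists_castSucc_eq.mpr hi
          exact hFroots i'
      have := few_roots k a e he t' ht' ht'pos hroots (Fin.last k)
      rw [this] at halast
      exact absurd halast (lt_irrefl 0)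

theorem bernstein_vandermonde_strictly_totally_positive (l n : ℕ) (hln : n ≤ l)
    (x : Fin (l+1) → ℝ) (hmono : StrictMono x) (h01 : ∀ i, 0 < x i ∧ x i < 1) :
    ∀ (k : ℕ) (r : Fin k → Fin (l+1)) (c : Fin k → Fin (n+1)),
      StrictMono r → StrictMono c →
      0 < ((Matrix.of fun (i : Fin (l+1)) (j : Fin (n+1)) =>
        (n.choose (j : ℕ) : ℝ) * x i ^ (j : ℕ) * (1 - x i) ^ (n - (j : ℕ))).submatrix r c).det := by
  intro k r c hr hc
  set y : Fin k → ℝ := fun i => x (r i) with hy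
  have hy0 : ∀ i, 0 < y i := fun i => (h01 (r i)).1
  have hy1 : ∀ i, y i < 1 := fun i => (h01 (r i)).2
  have hw0 : ∀ i, 0 < 1 - y i := fun i => sub_pos.mpr (hy1 i)
  set t : Fin k → ℝ := fun i => y i / (1 - y i) with ht
  have htpos : ∀ i, 0 < t i := fun i => div_pos (hy0 i) (hw0 i)
  have htmono : StrictMono t := by
    intro i j hij
    have hyy : y i < y j := hmono (hr hij)
    rw [ht, div_lt_div_iff₀ (hw0 i) (hw0 j)]
    nlinarith
  have hemono : StrictMono (fun j : Fin k => ((c j : ℕ))) := by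
    intro i j hij
    exact Fin.lt_iff_val_lt_val.mp (hc hij)
  have hfact : ((Matrix.of fun (i : Fin (l+1)) (j : Fin (n+1)) =>
        (n.choose (j : ℕ) : ℝ) * x i ^ (j : ℕ) * (1 - x i) ^ (n - (j : ℕ))).submatrix r c)
      = Matrix.of fun i j => ((n.choose (c j : ℕ) : ℝ)) *
          ((Matrix.of fun i j => ((1 - y i) ^ n) *
            (Matrix.of fun (i : Fin k) (j : Fin k) => t i ^ ((c j : ℕ))) i j) i j) := by
    ext i j
    simp only [Matrix.submatrix_apply, Matrix.of_apply]
    have hcn : (c j : ℕ) ≤ n := Nat.lt_succ_iff.mp (c j).isLt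
    have hwne : (1 - y i) ≠ 0 := (hw0 i).ne'
    rw [ht, div_pow]
    have hpow : (1 - y i) ^ n = (1 - y i) ^ (n - (c j : ℕ)) * (1 - y i) ^ (c j : ℕ) := by
      rw [← pow_add, Nat.sub_add_cancel hcn]
    rw [hpow]
    field_simp
    ring
  rw [hfact, Matrix.det_mul_row, Matrix.det_mul_column]
  have h1 : 0 < ∏ j : Fin k, (n.choose (c j : ℕ) : ℝ) :=
    Finset.prod_pos fun j _ => Nat.cast_pos.mpr (Nat.choose_pos (Nat.lt_succ_iff.mp (c j).isLt))
  have h2 : 0 < ∏ i : Fin k, (1 - y i) ^ n :=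
    Finset.prod_pos fun i _ => pow_pos (hw0 i) n
  have h3 := genVandermonde_pos k t (fun j => ((c j : ℕ))) htmono htpos hemono
  positivity
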